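/- Let Σ be an n × n positive definite real matrix, and for T ⊆ {1,...,n} let Σ_T be the principal submatrix indexed by T. Then T ↦ log det(Σ_T) (with log det(Σ_∅) = 0) is a submodular set function. -/

import Mathlib

open Matrix Finset

namespace Stmt12Aux

lemma posDef_submatrix_of_injective {N k : Type*} [Fintype N] [DecidableEq N]
    [Fintype k] [DecidableEq k]
    {M : Matrix N N ℝ} (hM : M.PosDef) {e : k → N} (he : Function.Injective e) :
    (M.submatrix e e).PosDef := by
  refine Matrix.PosDef.of_dotProduct_mulVec_pos (hM.1.submatrix e) fun x hx => ?_
  classical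
  set y : N → ℝ := Function.extend e x 0 with hydef
  have hyek : ∀ kk, y (e kk) = x kk := fun kk => he.extend_apply x 0 kk
  have hy0 : ∀ a, a ∉ Finset.univ.image e → y a = 0 := by
    intro a ha
    have h' : ¬ ∃ kk, e kk = a := by simpa [Finset.mem_image] using ha
    simp [hydef, Function.extend_def, h']
  have hinj : ∀ i ∈ Finset.univ, ∀ j ∈ Finset.univ, e i = e j → i = j :=
    fun i _ j _ h => he h
  have hmv : ∀ kk, (M *ᵥ y) (e kk) = ((M.submatrix e e) *ᵥ x) kk := by
    intro kk
    simp only [Matrix.mulVec, dotProduct, Matrix.submatrix_apply]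
    rw [← Finset.sum_subset (Finset.subset_univ (Finset.univ.image e))
      (fun a _ ha => by rw [hy0 a ha, mul_zero]),
      Finset.sum_image hinj]
    exact Finset.sum_congr rfl fun l _ => by rw [hyek]
  have key : star y ⬝ᵥ (M *ᵥ y) = star x ⬝ᵥ ((M.submatrix e e) *ᵥ x) := by
    simp only [dotProduct, Pi.star_apply, star_trivial]
    rw [← Finset.sum_subset (Finset.subset_univ (Finset.univ.image e))
      (fun a _ ha => by rw [hy0 a ha, zero_mul]),
      Finset.sum_image hinj]
    exact Finset.sum_congr rfl fun l _ => by rw [hyek, hmv]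
  have hyne : y ≠ 0 := by
    obtain ⟨kk, hkk⟩ := Function.ne_iff.mp hx
    exact Function.ne_iff.mpr ⟨e kk, by rw [hyek]; simpa using hkk⟩
  have := hM.dotProduct_mulVec_pos hyne
  rwa [key] at this


variable {n : ℕ} (Sig : Matrix (Fin n) (Fin n) ℝ)

/-- principal submatrix -/
def G (T : Finset (Fin n)) : Matrix T T ℝ :=
  Sig.submatrix (fun j : T => (j : Fin n)) (fun j : T => (j : Fin n))

/-- Schur complement scalar -/
noncomputable def schur (T : Finset (Fin n)) (i : Fin n) : ℝ :=
  Sig i i - (fun j : T => Sig i (j : Fin n)) ⬝ᵥ ((G Sig T)⁻¹ *ᵥ fun j : T => Sig (j : Fin n) i)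

variable {Sig}

lemma G_posDef (hSig : Sig.PosDef) (T : Finset (Fin n)) : (G Sig T).PosDef :=
  posDef_submatrix_of_injective hSig Subtype.coe_injective

lemma det_insert (hSig : Sig.PosDef) {T : Finset (Fin n)} {i : Fin n} (hi : i ∉ T) :
    (G Sig (insert i T)).det = (G Sig T).det * schur Sig T i := by
  classical
  have hpd := G_posDef hSig T
  haveI : Invertible (G Sig T) := (G_posDef hSig T).isUnit.invertible
  set f : (T ⊕ Unit) → {x // x ∈ insert i T} :=
    Sum.elim (fun j => ⟨(j : Fin n), Finset.mem_insert_of_mem j.2⟩)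
      (fun _ => ⟨i, Finset.mem_insert_self i T⟩) with hf
  have hbij : Function.Bijective f := by
    constructor
    · rintro (a | a) (b | b) h <;> simp only [hf, Sum.elim_inl, Sum.elim_inr,
        Subtype.mk.injEq] at h
      · exact congrArg Sum.inl (Subtype.ext h)
      · exact absurd (h ▸ a.2) hi
      · exact absurd (h ▸ b.2) hi
      · rfl
    · rintro ⟨a, ha⟩
      rcases Finset.mem_insert.mp ha with h | h
      · exact ⟨Sum.inr (), by simp [hf, h]⟩
      · exact ⟨Sum.inl ⟨a, h⟩, rfl⟩
  set κ : (T ⊕ Unit) ≃ {x // x ∈ insert i T} := Equiv.ofBijective f hbij with hκ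
  have hblock : (G Sig (insert i T)).submatrix κ κ =
      Matrix.fromBlocks (G Sig T) (Matrix.of fun (j : T) (_ : Unit) => Sig (j : Fin n) i)
        (Matrix.of fun (_ : Unit) (k : T) => Sig i (k : Fin n))
        (Matrix.of fun (_ : Unit) (_ : Unit) => Sig i i) := by
    ext a b
    rcases a with j | _ <;> rcases b with k | _ <;> rfl
  have hdet : (G Sig (insert i T)).det = ((G Sig (insert i T)).submatrix κ κ).det :=
    (Matrix.det_submatrix_equiv_self κ _).symm
  rw [hdet, hblock, Matrix.det_fromBlocks₁₁, Matrix.invOf_eq_nonsing_inv]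
  congr 1
  rw [Matrix.det_unique]
  simp only [Matrix.sub_apply, Matrix.of_apply, schur]
  congr 1
  simp only [Matrix.mul_apply, dotProduct, Matrix.mulVec, Matrix.of_apply,
    dotProduct, Finset.mul_sum, Finset.sum_mul]
  rw [Finset.sum_comm]
  exact Finset.sum_congr rfl fun j _ => Finset.sum_congr rfl fun k _ => by ring

lemma schur_pos (hSig : Sig.PosDef) {T : Finset (Fin n)} {i : Fin n} (hi : i ∉ T) :
    0 < schur Sig T i := by
  have h1 := (G_posDef hSig T).det_pos
  have h2 := (G_posDef hSig (insert i T)).det_pos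
  rw [det_insert hSig hi] at h2
  nlinarith

/-- symmetric bilinear identity -/
lemma dot_symm (hSig : Sig.PosDef) (T : Finset (Fin n)) (u v : T → ℝ) :
    u ⬝ᵥ (G Sig T *ᵥ v) = v ⬝ᵥ (G Sig T *ᵥ u) := by
  have hsymm : (G Sig T)ᵀ = G Sig T := by
    have := (G_posDef hSig T).1
    rwa [Matrix.IsHermitian, Matrix.conjTranspose_eq_transpose_of_trivial] at this
  rw [Matrix.dotProduct_mulVec, ← Matrix.mulVec_transpose, hsymm, dotProduct_comm]

lemma schur_expand (hSig : Sig.PosDef) (T : Finset (Fin n)) (i : Fin n) (x : T → ℝ) :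
    (Sig i i - 2 * (x ⬝ᵥ fun j : T => Sig (j : Fin n) i)
        + x ⬝ᵥ (G Sig T *ᵥ x)) - schur Sig T i
      = (x - (G Sig T)⁻¹ *ᵥ (fun j : T => Sig (j : Fin n) i)) ⬝ᵥ
        (G Sig T *ᵥ (x - (G Sig T)⁻¹ *ᵥ (fun j : T => Sig (j : Fin n) i))) := by
  classical
  set A := G Sig T
  set c : T → ℝ := fun j : T => Sig (j : Fin n) i with hc
  set xs : T → ℝ := A⁻¹ *ᵥ c with hxs
  have hAxs : A *ᵥ xs = c := by
    rw [hxs, Matrix.mulVec_mulVec, Matrix.mul_nonsing_inv _ (G_posDef hSig T).det_pos.ne'.isUnit,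
      Matrix.one_mulVec]
  have hrow : (fun j : T => Sig i (j : Fin n)) = c := by
    funext j
    exact (hSig.1.apply _ _).symm.trans (by simp [hc])
  have hschur : schur Sig T i = Sig i i - c ⬝ᵥ xs := by
    rw [schur, hrow]
  rw [hschur, Matrix.mulVec_sub, hAxs, sub_dotProduct, dotProduct_sub,
    dotProduct_sub, dot_symm hSig T xs x, hAxs]
  have h1 : xs ⬝ᵥ c = c ⬝ᵥ xs := dotProduct_comm _ _
  ring_nf
  linarith [h1]

/-- global quadratic form restricted to a finset -/
def Qf (S : Matrix (Fin n) (Fin n) ℝ) (g : Fin n → ℝ) (T : Finset (Fin n)) (i : Fin n) : ℝ :=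
  S i i - 2 * ∑ a ∈ T, g a * S a i + ∑ a ∈ T, ∑ b ∈ T, g a * S a b * g b

lemma Qf_bridge (g : Fin n → ℝ) (T : Finset (Fin n)) (i : Fin n) :
    Qf Sig g T i = Sig i i - 2 * ((fun j : T => g (j : Fin n)) ⬝ᵥ fun j : T => Sig (j : Fin n) i)
      + (fun j : T => g (j : Fin n)) ⬝ᵥ (G Sig T *ᵥ fun j : T => g (j : Fin n)) := by
  rw [Qf]
  congr 1
  · congr 1
    rw [dotProduct, ← Finset.sum_coe_sort T (fun a => g a * Sig a i)]
  · rw [← Finset.sum_coe_sort T (fun a => ∑ b ∈ T, g a * Sig a b * g b),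
      dotProduct]
    refine Finset.sum_congr rfl fun j _ => ?_
    rw [← Finset.sum_coe_sort T (fun b => g (j : Fin n) * Sig (j : Fin n) b * g b),
      Matrix.mulVec, dotProduct, Finset.mul_sum]
    refine Finset.sum_congr rfl fun k _ => ?_
    rw [G]; simp [mul_assoc]

lemma Qf_mono (g : Fin n → ℝ) {A B : Finset (Fin n)} (hAB : A ⊆ B)
    (hg : ∀ a, a ∉ A → g a = 0) (i : Fin n) : Qf Sig g B i = Qf Sig g A i := by
  rw [Qf, Qf]
  congr 1
  · congr 2
    exact (Finset.sum_subset hAB fun a _ ha => by rw [hg a ha, zero_mul]).symm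
  · rw [← Finset.sum_subset hAB (fun a _ ha => ?_)]
    · refine Finset.sum_congr rfl fun a _ => ?_
      exact (Finset.sum_subset hAB fun b _ hb => by rw [hg b hb, mul_zero]).symm
    · refine Finset.sum_eq_zero fun b _ => by rw [hg a ha, zero_mul, zero_mul]

/-- key monotonicity of the Schur complement -/
lemma schur_mono (hSig : Sig.PosDef) {A B : Finset (Fin n)} (hAB : A ⊆ B) (i : Fin n) :
    schur Sig B i ≤ schur Sig A i := by
  classical
  set c : A → ℝ := fun j : A => Sig (j : Fin n) i with hc
  set xs : A → ℝ := (G Sig A)⁻¹ *ᵥ c with hxs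
  set g : Fin n → ℝ := fun a => if h : a ∈ A then xs ⟨a, h⟩ else 0 with hg
  have hg0 : ∀ a, a ∉ A → g a = 0 := fun a ha => dif_neg ha
  have hrestr : (fun j : A => g (j : Fin n)) = xs := by
    funext j; simp [hg, j.2]
  -- schur B ≤ Qf Sig g B i
  have h1 : schur Sig B i ≤ Qf Sig g B i := by
    rw [Qf_bridge]
    have := schur_expand hSig B i (fun j : B => g (j : Fin n))
    have hps := (G_posDef hSig B).posSemidef.dotProduct_mulVec_nonneg
      ((fun j : B => g (j : Fin n)) - (G Sig B)⁻¹ *ᵥ (fun j : B => Sig (j : Fin n) i))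
    simp only [star_trivial] at hps
    linarith
  have h2 : Qf Sig g A i = schur Sig A i := by
    rw [Qf_bridge, hrestr]
    have := schur_expand hSig A i xs
    rw [← hc, ← hxs, sub_self] at this
    simp only [zero_dotProduct] at this
    linarith
  rw [Qf_mono g hAB hg0 i, h2] at h1
  exact h1

end Stmt12Aux

/-- For a positive definite matrix `Sig`, the map `T ↦ log det (Sig_T)` on
principal submatrices is submodular (with value `0` on the empty set). -/
theorem stmt_12 {n : ℕ} (Sig : Matrix (Fin n) (Fin n) ℝ) (hSig : Sig.PosDef)
    (φ : Finset (Fin n) → ℝ)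
    (hφ : ∀ T : Finset (Fin n),
      φ T = Real.log ((Sig.submatrix
        (fun j : T => (j : Fin n)) (fun j : T => (j : Fin n))).det)) :
    φ ∅ = 0 ∧
    ∀ (A B : Finset (Fin n)) (i : Fin n), A ⊆ B → i ∉ B →
      φ (insert i B) - φ B ≤ φ (insert i A) - φ A := by
  classical
  have hinc : ∀ (T : Finset (Fin n)) (i : Fin n), i ∉ T →
      φ (insert i T) - φ T = Real.log (Stmt12Aux.schur Sig T i) := by
    intro T i hiT
    rw [hφ, hφ]
    show Real.log (Stmt12Aux.G Sig (insert i T)).det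
        - Real.log (Stmt12Aux.G Sig T).det = _
    rw [Stmt12Aux.det_insert hSig hiT,
      Real.log_mul (Stmt12Aux.G_posDef hSig T).det_pos.ne'
        (Stmt12Aux.schur_pos hSig hiT).ne']
    ring
  constructor
  · rw [hφ]
    haveI : IsEmpty {x // x ∈ (∅ : Finset (Fin n))} :=
      Finset.isEmpty_coe_sort.mpr rfl
    rw [Matrix.det_isEmpty, Real.log_one]
  · intro A B i hAB hiB
    have hiA : i ∉ A := fun h => hiB (hAB h)
    rw [hinc B i hiB, hinc A i hiA]
    exact Real.log_le_log (Stmt12Aux.schur_pos hSig hiB)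
      (Stmt12Aux.schur_mono hSig hAB i)
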